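/- If a prime integer p divides the reduced discriminant of the rational quaternion algebra H_ℚ(a,b) for nonzero integers a, b, then p divides 2ab. -/

import Mathlib

open Quaternion Polynomial

section Aux

variable {p : ℕ} [Fact p.Prime]

lemma toZMod_eq_zero_iff (z : ℤ_[p]) : PadicInt.toZMod z = 0 ↔ ‖z‖ < 1 := by
  rw [← RingHom.mem_ker, PadicInt.ker_toZMod, IsLocalRing.mem_maximalIdeal,
    mem_nonunits_iff, PadicInt.not_isUnit_iff]

lemma zmod_solution (hp2 : p ≠ 2) (α β : ZMod p) (hα : α ≠ 0) (hβ : β ≠ 0) :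
    ∃ x y : ZMod p, α * x ^ 2 + β * y ^ 2 = 1 := by
  have hodd : Fintype.card (ZMod p) % 2 = 1 := by
    rw [ZMod.card]
    exact Nat.odd_iff.mp ((Fact.out : p.Prime).odd_of_ne_two hp2)
  have hf2 : (C α * X ^ 2 : (ZMod p)[X]).degree = 2 := by
    rw [degree_C_mul_X_pow _ hα]; rfl
  have hg2 : (C β * X ^ 2 - C 1 : (ZMod p)[X]).degree = 2 := by
    rw [sub_eq_add_neg, ← C_neg, degree_add_C (by rw [degree_C_mul_X_pow _ hβ]; norm_num),
      degree_C_mul_X_pow _ hβ]; rfl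
  obtain ⟨x, y, hxy⟩ := FiniteField.exists_root_sum_quadratic hf2 hg2 hodd
  refine ⟨x, y, ?_⟩
  simp only [eval_add, eval_mul, eval_pow, eval_C, eval_X, eval_sub] at hxy
  linear_combination hxy

lemma hensel_step (hp2 : p ≠ 2) (α β x₁ y : ℤ_[p]) (hα : ‖α‖ = 1) (hx₁ : ‖x₁‖ = 1)
    (happrox : ‖α * x₁ ^ 2 + β * y ^ 2 - 1‖ < 1) :
    ∃ x : ℤ_[p], α * x ^ 2 + β * y ^ 2 = 1 := by
  set F : (ℤ_[p])[X] := C α * X ^ 2 + C (β * y ^ 2 - 1) with hF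
  have hFeval : ∀ t : ℤ_[p], F.eval t = α * t ^ 2 + β * y ^ 2 - 1 := by
    intro t; simp [hF]; ring
  have hFderiv : ∀ t : ℤ_[p], F.derivative.eval t = 2 * (α * t) := by
    intro t
    simp [hF, derivative_C_mul, derivative_pow]
    ring
  have h2 : ‖(2 : ℤ_[p])‖ = 1 := by
    have : ¬ ((p : ℤ) ∣ 2) := by
      intro h
      have h2 : p ∣ 2 := by exact_mod_cast h
      exact hp2 ((Nat.prime_dvd_prime_iff_eq Fact.out Nat.prime_two).mp h2)
    have := (PadicInt.norm_int_lt_one_iff_dvd (2 : ℤ)).not.mpr (by exact_mod_cast this)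
    push_neg at this
    exact le_antisymm (PadicInt.norm_le_one _) (by exact_mod_cast this)
  have hnorm : ‖F.eval x₁‖ < ‖F.derivative.eval x₁‖ ^ 2 := by
    rw [hFeval, hFderiv, norm_mul, norm_mul, h2, hα, hx₁]
    simpa using happrox
  obtain ⟨z, hz, -⟩ := hensels_lemma (F := F) (a := x₁) hnorm
  rw [coe_aeval_eq_eval, hFeval] at hz
  exact ⟨z, by linear_combination hz⟩

lemma padic_solution (hp2 : p ≠ 2) (α β : ℤ_[p]) (hα : ‖α‖ = 1) (hβ : ‖β‖ = 1) :
    ∃ x y : ℤ_[p], α * x ^ 2 + β * y ^ 2 = 1 := by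
  have hα0 : PadicInt.toZMod α ≠ 0 := by
    rw [Ne, toZMod_eq_zero_iff, hα]; simp
  have hβ0 : PadicInt.toZMod β ≠ 0 := by
    rw [Ne, toZMod_eq_zero_iff, hβ]; simp
  obtain ⟨x₀, y₀, hxy⟩ := zmod_solution hp2 _ _ hα0 hβ0
  -- lifts
  have lift : ∀ t : ZMod p, ∃ t' : ℤ_[p], PadicInt.toZMod t' = t := fun t =>
    ⟨((t.val : ℕ) : ℤ_[p]), by rw [map_natCast]; exact ZMod.natCast_rightInverse t⟩
  obtain ⟨x₁, hx₁⟩ := lift x₀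
  obtain ⟨y₁, hy₁⟩ := lift y₀
  have key : ∀ (γ δ u v : ℤ_[p]), ‖γ‖ = 1 →
      PadicInt.toZMod γ * (PadicInt.toZMod u) ^ 2 + PadicInt.toZMod δ * (PadicInt.toZMod v) ^ 2
        = 1 → PadicInt.toZMod u ≠ 0 →
      ∃ x y : ℤ_[p], γ * x ^ 2 + δ * y ^ 2 = 1 := by
    intro γ δ u v hγ heq hu
    have hnu : ‖u‖ = 1 := by
      have := (toZMod_eq_zero_iff u).not.mp hu
      push_neg at this
      exact le_antisymm (PadicInt.norm_le_one _) (by exact_mod_cast this)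
    have happrox : ‖γ * u ^ 2 + δ * v ^ 2 - 1‖ < 1 := by
      rw [← toZMod_eq_zero_iff]
      push_cast [map_add, map_mul, map_sub, map_pow, map_one]
      rw [heq]; ring
    obtain ⟨x, hx⟩ := hensel_step hp2 γ δ u v hγ hnu happrox
    exact ⟨x, v, hx⟩
  by_cases hx0 : x₀ = 0
  · -- then y₀ ≠ 0, swap roles
    have hy0 : PadicInt.toZMod y₁ ≠ 0 := by
      rw [hy₁]; intro h
      rw [hx0, h] at hxy; simp at hxy
    obtain ⟨y, x, h⟩ := key β α y₁ x₁ hβ (by rw [hx₁, hy₁]; linear_combination hxy) hy0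
    exact ⟨x, y, by linear_combination h⟩
  · obtain ⟨x, y, h⟩ := key α β x₁ y₁ hα (by rw [hx₁, hy₁]; exact hxy)
      (by rw [hx₁]; exact hx0)
    exact ⟨x, y, h⟩

end Aux

/-- if a prime `p` divides the reduced discriminant of `H_ℚ(a,b)`
(for nonzero integers `a, b`), i.e. `H_ℚ(a,b)` ramifies at `p` in the sense that
its base change to `ℚ_p` is a division algebra, then `p ∣ 2ab`. -/
theorem prime_dvd_two_mul_a_mul_b_of_ramified
    (a b : ℤ) (ha : a ≠ 0) (hb : b ≠ 0) (p : ℕ) [Fact p.Prime]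
    (hram : ∀ x : ℍ[ℚ_[p], (a : ℚ_[p]), (b : ℚ_[p])], x ≠ 0 → IsUnit x) :
    (p : ℤ) ∣ 2 * a * b := by
  by_contra hdvd
  have hp : p.Prime := Fact.out
  have hp2 : p ≠ 2 := by
    rintro rfl
    exact hdvd ⟨a * b, by ring⟩
  have hunit : ∀ c : ℤ, (¬ ((p : ℤ) ∣ c)) → ‖(c : ℤ_[p])‖ = 1 := by
    intro c hc
    have := (PadicInt.norm_int_lt_one_iff_dvd c).not.mpr hc
    push_neg at this
    exact le_antisymm (PadicInt.norm_le_one _) this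
  have hpa : ‖((a : ℤ) : ℤ_[p])‖ = 1 := hunit a fun h => hdvd (h.trans ⟨2 * b, by ring⟩)
  have hpb : ‖((b : ℤ) : ℤ_[p])‖ = 1 := hunit b fun h => hdvd (h.trans ⟨2 * a, by ring⟩)
  obtain ⟨x, y, hxy⟩ := padic_solution hp2 ((a : ℤ) : ℤ_[p]) ((b : ℤ) : ℤ_[p]) hpa hpb
  -- move to ℚ_p
  have hxyQ : (a : ℚ_[p]) * (x : ℚ_[p]) ^ 2 + (b : ℚ_[p]) * (y : ℚ_[p]) ^ 2 = 1 := by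
    have := congrArg (fun t : ℤ_[p] => (t : ℚ_[p])) hxy
    push_cast at this
    exact_mod_cast this
  set z : ℍ[ℚ_[p], (a : ℚ_[p]), (b : ℚ_[p])] :=
    ⟨1, (x : ℚ_[p]), (y : ℚ_[p]), 0⟩ with hz
  have hz0 : z ≠ 0 := by
    intro h
    have : z.re = (0 : ℍ[ℚ_[p], (a : ℚ_[p]), (b : ℚ_[p])]).re := by rw [h]
    simp [hz] at this
  have hzz : z * star z = 0 := by
    ext <;> simp only [hz, QuaternionAlgebra.re_mul, QuaternionAlgebra.imI_mul,
      QuaternionAlgebra.imJ_mul, QuaternionAlgebra.imK_mul, QuaternionAlgebra.re_star,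
      QuaternionAlgebra.imI_star, QuaternionAlgebra.imJ_star, QuaternionAlgebra.imK_star,
      QuaternionAlgebra.re_zero, QuaternionAlgebra.imI_zero, QuaternionAlgebra.imJ_zero,
      QuaternionAlgebra.imK_zero] <;> first | linear_combination -hxyQ | ring
  obtain ⟨u, hu⟩ := hram z hz0
  have hstar : star z ≠ 0 := by
    intro h
    have : (star z).re = (0 : ℍ[ℚ_[p], (a : ℚ_[p]), (b : ℚ_[p])]).re := by rw [h]
    simp [hz] at this
  apply hstar
  calc star z = (↑u⁻¹ * u : ℍ[ℚ_[p], (a : ℚ_[p]), (b : ℚ_[p])]) * star z := by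
        rw [Units.inv_mul, one_mul]
    _ = ↑u⁻¹ * (z * star z) := by rw [mul_assoc, hu]
    _ = 0 := by rw [hzz, mul_zero]
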